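/- Set T = r d (α h K (1-c) - 1 - 2 α h (1-c) x*)/(α θ K (1-c)) and D = r d (α K (1-c)(θ - h d) - d)/(K α θ (1-c)) (the trace and determinant of the Jacobian of f at (x*, y*)). Assume θ > θ1, θ > θ2, α > 1/(K h), and c2 < c < c1. Then D > 0 and T < 0, and consequently every complex root ξ of ξ² - T ξ + D = 0 satisfies |arg(ξ)| > mπ/2 for every m ∈ (0, 1]. -/

import Mathlib

lemma neg_re_arg (ξ : ℂ) (hre : ξ.re < 0) : Real.pi / 2 < |ξ.arg| := by
  by_contra hle
  push_neg at hle
  rw [Complex.abs_arg_le_pi_div_two_iff] at hle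
  linarith

/-- If θ > θ₁, θ > θ₂, α > 1/(Kh) and c₂ < c < c₁, then the determinant D of
the Jacobian at the interior equilibrium is positive, its trace T is negative, and every
complex root ξ of ξ² - Tξ + D = 0 satisfies |arg ξ| > mπ/2 for all m ∈ (0,1]. -/
theorem interior_stable_all_orders
    (r K α h d θ c xs T D : ℝ)
    (hr : 0 < r) (hK : 0 < K) (hα : 0 < α) (hh : 0 < h) (hd : 0 < d)
    (hθ0 : 0 < θ) (hθlt : θ < 1) (hc0 : 0 < c) (hclt : c < 1)
    (hθ1 : θ > h * d + d / (α * K))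
    (hθ2 : θ > h * d * (α * K * h + 1) / (α * K * h - 1))
    (hα' : α > 1 / (K * h))
    (hc2 : c > 1 - (θ + h * d) / (α * K * h * (θ - h * d)))
    (hc1 : c < 1 - d / (α * K * (θ - h * d)))
    (hxs : xs = d / (α * (1 - c) * (θ - h * d)))
    (hT : T = r * d * (α * h * K * (1 - c) - 1 - 2 * α * h * (1 - c) * xs) / (α * θ * K * (1 - c)))
    (hD : D = r * d * (α * K * (1 - c) * (θ - h * d) - d) / (K * α * θ * (1 - c))) :
    0 < D ∧ T < 0 ∧
      ∀ ξ : ℂ, ξ ^ 2 - (T : ℂ) * ξ + (D : ℂ) = 0 →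
        ∀ m : ℝ, 0 < m → m ≤ 1 → m * Real.pi / 2 < |ξ.arg| := by
  have he : 0 < 1 - c := by linarith
  have hαK : 0 < α * K := mul_pos hα hK
  have hg : 0 < θ - h * d := by
    have : 0 < d / (α * K) := div_pos hd hαK
    linarith
  -- determinant positive
  have hN : 0 < α * K * (1 - c) * (θ - h * d) - d := by
    have h1 : d / (α * K * (θ - h * d)) < 1 - c := by linarith
    rw [div_lt_iff₀ (by positivity)] at h1
    nlinarith
  have hDpos : 0 < D := by
    rw [hD]
    exact div_pos (by positivity) (by positivity)
  -- trace negative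
  have hM : α * h * K * (1 - c) - 1 - 2 * α * h * (1 - c) * xs < 0 := by
    have h2 : 1 - c < (θ + h * d) / (α * K * h * (θ - h * d)) := by linarith
    rw [lt_div_iff₀ (by positivity)] at h2
    have hxsv : 2 * α * h * (1 - c) * xs = 2 * h * d / (θ - h * d) := by
      rw [hxs]; field_simp
    rw [hxsv, sub_neg, lt_div_iff₀ hg]
    nlinarith
  have hTneg : T < 0 := by
    rw [hT]
    exact div_neg_of_neg_of_pos (mul_neg_of_pos_of_neg (mul_pos hr hd) hM) (by positivity)
  refine ⟨hDpos, hTneg, ?_⟩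
  intro ξ heq m hm0 hm1
  have hre : ξ.re < 0 := by
    have h1 := congrArg Complex.re heq
    have h2 := congrArg Complex.im heq
    simp [pow_two, Complex.mul_re, Complex.mul_im] at h1 h2
    rcases mul_eq_zero.mp (show ξ.im * (2 * ξ.re - T) = 0 by linarith) with him | hre2
    · -- real root
      rw [him] at h1
      by_contra hge
      push_neg at hge
      nlinarith [mul_nonneg hge hge, mul_nonneg (neg_nonneg.mpr hTneg.le) hge]
    · linarith
  have := neg_re_arg ξ hre
  have hpi := Real.pi_pos
  have : m * Real.pi / 2 ≤ Real.pi / 2 := by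
    apply div_le_div_of_nonneg_right _ (by norm_num)
    nlinarith
  linarith [neg_re_arg ξ hre]
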